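/- Let (V, d_V) and (W, d_W) together with σ, τ, h be a contraction. Then W is the internal direct sum W = im(τ∘σ) ⊕ im(h∘d_W) ⊕ im(d_W∘h) of graded submodules, and im(τ∘σ) = ker(h∘d_W + d_W∘h). -/

import Mathlib

lemma contraction_aux {R M : Type*} [CommRing R] [AddCommGroup M] [Module R M]
    (p : Fin 3 → (M →ₗ[R] M))
    (hsum : p 0 + p 1 + p 2 = LinearMap.id)
    (horth : ∀ i j, i ≠ j → (p i).comp (p j) = 0) :
    DirectSum.IsInternal (fun i => LinearMap.range (p i)) := by
  have hzero : ∀ i j, i ≠ j → ∀ x, p i (p j x) = 0 := by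
    intro i j hij x
    have := congrArg (fun f : M →ₗ[R] M => f x) (horth i j hij)
    simpa using this
  have hdecomp : ∀ x : M, p 0 x + p 1 x + p 2 x = x := by
    intro x
    have := congrArg (fun f : M →ₗ[R] M => f x) hsum
    simpa using this
  have hid : ∀ i x, p i (p i x) = p i x := by
    intro i x
    fin_cases i <;>
    · nth_rewrite 2 [← hdecomp x]
      simp [hzero, map_add]
  apply DirectSum.isInternal_submodule_of_iSupIndep_of_iSup_eq_top
  · intro i
    rw [disjoint_iff_inf_le]
    rintro x ⟨hx1, hx2⟩
    have hle : (⨆ j, ⨆ _ : j ≠ i, LinearMap.range (p j)) ≤ LinearMap.ker (p i) := by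
      apply iSup₂_le
      rintro j hj y ⟨z, rfl⟩
      simp [LinearMap.mem_ker, hzero i j (Ne.symm hj)]
    have hker : p i x = 0 := hle hx2
    obtain ⟨y, rfl⟩ := hx1
    have : p i (p i y) = 0 := hker
    rw [hid] at this
    simp [this]
  · rw [eq_top_iff]
    intro x _
    rw [← hdecomp x]
    have hm : ∀ i : Fin 3, p i x ∈ ⨆ j, LinearMap.range (p j) := fun i =>
      (le_iSup (fun j => LinearMap.range (p j)) i) ⟨x, rfl⟩
    exact add_mem (add_mem (hm 0) (hm 1)) (hm 2)

/-- In any contraction, `W` is the internal direct sum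
`W = im(τ∘σ) ⊕ im(h∘dW) ⊕ im(dW∘h)` of graded submodules, and
`im(τ∘σ) = ker(h∘dW + dW∘h)`.  (Stated at every degree `n + 1`.) -/
theorem contraction_direct_sum_decomposition
    (R : Type*) [CommRing R]
    (V W : ℤ → Type*)
    [∀ n, AddCommGroup (V n)] [∀ n, Module R (V n)]
    [∀ n, AddCommGroup (W n)] [∀ n, Module R (W n)]
    (dV : ∀ n : ℤ, V n →ₗ[R] V (n + 1))
    (dW : ∀ n : ℤ, W n →ₗ[R] W (n + 1))
    (σ : ∀ n : ℤ, W n →ₗ[R] V n)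
    (τ : ∀ n : ℤ, V n →ₗ[R] W n)
    (h : ∀ n : ℤ, W (n + 1) →ₗ[R] W n)
    (dV_sq : ∀ n, (dV (n + 1)).comp (dV n) = 0)
    (dW_sq : ∀ n, (dW (n + 1)).comp (dW n) = 0)
    (σ_chain : ∀ n, (σ (n + 1)).comp (dW n) = (dV n).comp (σ n))
    (τ_chain : ∀ n, (dW n).comp (τ n) = (τ (n + 1)).comp (dV n))
    (side_στ : ∀ n, (σ n).comp (τ n) = LinearMap.id)
    (side_homotopy : ∀ n,
      (LinearMap.id : W (n + 1) →ₗ[R] W (n + 1)) - (τ (n + 1)).comp (σ (n + 1))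
        = (h (n + 1)).comp (dW (n + 1)) + (dW n).comp (h n))
    (side_σh : ∀ n, (σ n).comp (h n) = 0)
    (side_hτ : ∀ n, (h n).comp (τ (n + 1)) = 0)
    (side_hh : ∀ n, (h n).comp (h (n + 1)) = 0) :
    ∀ n : ℤ,
      DirectSum.IsInternal
        (![LinearMap.range ((τ (n + 1)).comp (σ (n + 1))),
           LinearMap.range ((h (n + 1)).comp (dW (n + 1))),
           LinearMap.range ((dW n).comp (h n))] : Fin 3 → Submodule R (W (n + 1))) ∧
      LinearMap.range ((τ (n + 1)).comp (σ (n + 1)))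
        = LinearMap.ker ((h (n + 1)).comp (dW (n + 1)) + (dW n).comp (h n)) := by
  intro n
  set p0 : W (n+1) →ₗ[R] W (n+1) := (τ (n + 1)).comp (σ (n + 1)) with hp0
  set p1 : W (n+1) →ₗ[R] W (n+1) := (h (n + 1)).comp (dW (n + 1)) with hp1
  set p2 : W (n+1) →ₗ[R] W (n+1) := (dW n).comp (h n) with hp2
  -- pointwise versions of the hypotheses
  have σc : ∀ m (x : W m), σ (m+1) (dW m x) = dV m (σ m x) := fun m x =>
    LinearMap.ext_iff.mp (σ_chain m) x
  have τc : ∀ m (v : V m), dW m (τ m v) = τ (m+1) (dV m v) := fun m v =>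
    LinearMap.ext_iff.mp (τ_chain m) v
  have στ : ∀ m (v : V m), σ m (τ m v) = v := fun m v =>
    LinearMap.ext_iff.mp (side_στ m) v
  have σh : ∀ m (x : W (m+1)), σ m (h m x) = 0 := fun m x =>
    LinearMap.ext_iff.mp (side_σh m) x
  have hτ : ∀ m (v : V (m+1)), h m (τ (m+1) v) = 0 := fun m v =>
    LinearMap.ext_iff.mp (side_hτ m) v
  have hh : ∀ m (x : W (m+1+1)), h m (h (m+1) x) = 0 := fun m x =>
    LinearMap.ext_iff.mp (side_hh m) x
  have dd : ∀ m (x : W m), dW (m+1) (dW m x) = 0 := fun m x =>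
    LinearMap.ext_iff.mp (dW_sq m) x
  have hsum : p0 + p1 + p2 = LinearMap.id := by
    have := side_homotopy n
    rw [sub_eq_iff_eq_add] at this
    rw [hp0, hp1, hp2]
    rw [this]
    abel
  have h01 : p0.comp p1 = 0 := by
    ext x; simp [hp0, hp1, σh]
  have h02 : p0.comp p2 = 0 := by
    ext x; simp [hp0, hp2, σc, σh]
  have h10 : p1.comp p0 = 0 := by
    ext x; simp [hp0, hp1, τc, hτ]
  have h12 : p1.comp p2 = 0 := by
    ext x; simp [hp1, hp2, dd]
  have h20 : p2.comp p0 = 0 := by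
    ext x; simp [hp0, hp2, hτ]
  have h21 : p2.comp p1 = 0 := by
    ext x; simp [hp1, hp2, hh]
  have horth : ∀ i j, i ≠ j →
      ((![p0, p1, p2] : Fin 3 → _) i).comp ((![p0, p1, p2] : Fin 3 → _) j) = 0 := by
    intro i j hij
    fin_cases i <;> fin_cases j <;> simp_all
  have key := contraction_aux (![p0, p1, p2] : Fin 3 → _) (by simpa using hsum) horth
  constructor
  · have : (fun i => LinearMap.range ((![p0, p1, p2] : Fin 3 → _) i)) =
        (![LinearMap.range p0, LinearMap.range p1, LinearMap.range p2] :
          Fin 3 → Submodule R (W (n+1))) := by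
      funext i; fin_cases i <;> rfl
    rw [this] at key
    exact key
  · ext x
    constructor
    · rintro ⟨y, rfl⟩
      have e1 : p1 (p0 y) = 0 := LinearMap.ext_iff.mp h10 y
      have e2 : p2 (p0 y) = 0 := LinearMap.ext_iff.mp h20 y
      simp only [LinearMap.mem_ker, LinearMap.add_apply]
      rw [show ((h (n+1)).comp (dW (n+1))) (p0 y) = p1 (p0 y) from rfl,
        show ((dW n).comp (h n)) (p0 y) = p2 (p0 y) from rfl, e1, e2, add_zero]
    · intro hx
      have hx' : p1 x + p2 x = 0 := hx
      have hd : p0 x + p1 x + p2 x = x := by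
        have := congrArg (fun f : W (n+1) →ₗ[R] W (n+1) => f x) hsum
        simpa using this
      rw [add_assoc, hx', add_zero] at hd
      exact ⟨x, hd⟩
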